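/- Let σ ≤ −1 and ρ, ρ', s, s' be real parameters with ρ < ρ'. Then there exists a constant δ > 0 such that for all integers p, q ≥ 1: (p + q − 1)·(p+q)!^σ·2^{ρ(p+q)}·(1 + p + q)^s ≤ δ·(p!)^σ·2^{ρ'p}·(1 + p)^{s'}·(q!)^σ·2^{ρ'q}·(1 + q)^{s'}. -/

import Mathlib

/-- The weight family `w n (σ, ρ, s) = (n!)^σ · 2^(ρn) · (1+n)^s` on positive integers,
with real exponents (real powers). -/
noncomputable def wgt (σ ρ s : ℝ) (n : ℕ) : ℝ :=
  ((n.factorial : ℝ)) ^ σ * (2 : ℝ) ^ (ρ * n) * (1 + (n : ℝ)) ^ s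

lemma wgt_bdd (C ε : ℝ) (hε : 0 < ε) :
    ∃ δ : ℝ, 0 < δ ∧ ∀ n : ℕ, (1 + (n : ℝ)) ^ C * (2 : ℝ) ^ (-ε * n) ≤ δ := by
  set b : ℝ := ε * Real.log 2 with hb
  have hb0 : 0 < b := mul_pos hε (Real.log_pos one_lt_two)
  have key : Filter.Tendsto (fun n : ℕ => (1 + (n : ℝ)) ^ C * (2 : ℝ) ^ (-ε * n))
      Filter.atTop (nhds 0) := by
    have h1 : Filter.Tendsto (fun n : ℕ => 1 + (n : ℝ)) Filter.atTop Filter.atTop := by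
      exact Filter.tendsto_atTop_add_const_left _ 1 tendsto_natCast_atTop_atTop
    have h2 := (tendsto_rpow_mul_exp_neg_mul_atTop_nhds_zero C b hb0).comp h1
    have h3 : Filter.Tendsto
        (fun n : ℕ => Real.exp b * ((1 + (n : ℝ)) ^ C * Real.exp (-b * (1 + (n:ℝ)))))
        Filter.atTop (nhds (Real.exp b * 0)) := h2.const_mul _
    rw [mul_zero] at h3
    refine h3.congr fun n => ?_
    have : (2 : ℝ) ^ (-ε * (n : ℝ)) = Real.exp (Real.log 2 * (-ε * n)) :=
      Real.rpow_def_of_pos two_pos _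
    rw [this, show Real.log 2 * (-ε * (n:ℝ)) = b + -b * (1 + (n:ℝ)) by rw [hb]; ring,
      Real.exp_add]
    ring
  obtain ⟨δ0, hδ0⟩ := key.bddAbove_range
  refine ⟨max δ0 1, lt_of_lt_of_le one_pos (le_max_right _ _), fun n => ?_⟩
  exact le_trans (hδ0 (Set.mem_range_self n)) (le_max_left _ _)

/-- Mixed multiplicative weight inequality:
for some constant `δ > 0`,
`(p+q-1)·w (p+q) (σ,ρ,s) ≤ δ·w p (σ,ρ',s')·w q (σ,ρ',s')` for all `p, q ≥ 1`. -/
theorem weight_inequality_mixed_rho (σ ρ ρ' s s' : ℝ) (hσ : σ ≤ -1) (hρ : ρ < ρ') :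
    ∃ δ : ℝ, 0 < δ ∧ ∀ p q : ℕ, 1 ≤ p → 1 ≤ q →
      ((p : ℝ) + q - 1) * wgt σ ρ s (p + q) ≤ δ * wgt σ ρ' s' p * wgt σ ρ' s' q := by
  set C : ℝ := 1 + |s| + 2 * |s'| with hC
  obtain ⟨δ, hδpos, hδ⟩ := wgt_bdd C (ρ' - ρ) (by linarith)
  refine ⟨δ, hδpos, fun p q hp hq => ?_⟩
  set n : ℕ := p + q with hn
  have hp1 : (1 : ℝ) ≤ 1 + (p : ℝ) := by linarith [Nat.cast_nonneg (α := ℝ) p]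
  have hq1 : (1 : ℝ) ≤ 1 + (q : ℝ) := by linarith [Nat.cast_nonneg (α := ℝ) q]
  have hn1 : (1 : ℝ) ≤ 1 + (n : ℝ) := by linarith [Nat.cast_nonneg (α := ℝ) n]
  have hpn : (1 : ℝ) + p ≤ 1 + n := by
    have : (p : ℝ) ≤ n := by exact_mod_cast Nat.le_add_right p q
    linarith
  have hqn : (1 : ℝ) + q ≤ 1 + n := by
    have : (q : ℝ) ≤ n := by exact_mod_cast Nat.le_add_left q p
    linarith
  have hσ0 : σ ≤ 0 := le_trans hσ (by norm_num)
  -- factorial inequality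
  have hfact : ((n.factorial : ℝ)) ^ σ ≤ ((p.factorial : ℝ)) ^ σ * ((q.factorial : ℝ)) ^ σ := by
    have hdvd : p.factorial * q.factorial ≤ n.factorial :=
      Nat.le_of_dvd n.factorial_pos (Nat.factorial_mul_factorial_dvd_factorial_add p q)
    have hcast : ((p.factorial : ℝ)) * ((q.factorial : ℝ)) ≤ (n.factorial : ℝ) := by
      exact_mod_cast hdvd
    have h1 : ((n.factorial : ℝ)) ^ σ ≤ (((p.factorial : ℝ)) * ((q.factorial : ℝ))) ^ σ :=
      Real.rpow_le_rpow_of_nonpos (by positivity) hcast hσ0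
    rwa [Real.mul_rpow (by positivity) (by positivity)] at h1
  -- polynomial part
  have hpoly : ((p : ℝ) + q - 1) * (1 + (n : ℝ)) ^ s * (2 : ℝ) ^ ((ρ - ρ') * n)
      ≤ δ * ((1 + (p : ℝ)) ^ s' * (1 + (q : ℝ)) ^ s') := by
    have ha : (p : ℝ) + q - 1 ≤ (1 + (n : ℝ)) ^ (1 : ℝ) := by
      rw [Real.rpow_one]; push_cast [hn]; linarith
    have hbs : (1 + (n : ℝ)) ^ s ≤ (1 + (n : ℝ)) ^ |s| :=
      Real.rpow_le_rpow_of_exponent_le hn1 (le_abs_self s)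
    have hcp : (1 + (n : ℝ)) ^ (-|s'|) ≤ (1 + (p : ℝ)) ^ s' :=
      le_trans (Real.rpow_le_rpow_of_nonpos (by positivity) hpn (neg_nonpos.mpr (abs_nonneg _)))
        (Real.rpow_le_rpow_of_exponent_le hp1 (neg_abs_le s'))
    have hcq : (1 + (n : ℝ)) ^ (-|s'|) ≤ (1 + (q : ℝ)) ^ s' :=
      le_trans (Real.rpow_le_rpow_of_nonpos (by positivity) hqn (neg_nonpos.mpr (abs_nonneg _)))
        (Real.rpow_le_rpow_of_exponent_le hq1 (neg_abs_le s'))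
    have step1 : ((p : ℝ) + q - 1) * (1 + (n : ℝ)) ^ s * (2 : ℝ) ^ ((ρ - ρ') * n)
        ≤ ((1 + (n : ℝ)) ^ (1 : ℝ) * (1 + (n : ℝ)) ^ |s|) * (2 : ℝ) ^ ((ρ - ρ') * n) := by
      apply mul_le_mul_of_nonneg_right _ (by positivity)
      have hpq1 : (0 : ℝ) ≤ (p : ℝ) + q - 1 := by
        have h1' : (1 : ℝ) ≤ (p : ℝ) := by exact_mod_cast hp
        have h2' : (1 : ℝ) ≤ (q : ℝ) := by exact_mod_cast hq
        linarith
      exact mul_le_mul ha hbs (by positivity) (by positivity)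
    have key : (1 + (n : ℝ)) ^ (1 : ℝ) * (1 + (n : ℝ)) ^ |s|
        = (1 + (n : ℝ)) ^ C * ((1 + (n : ℝ)) ^ (-|s'|) * (1 + (n : ℝ)) ^ (-|s'|)) := by
      rw [← Real.rpow_add (by positivity), ← Real.rpow_add (by positivity),
        ← Real.rpow_add (by positivity)]
      ring_nf
      congr 1; rw [hC]; ring
    have step2 : ((1 + (n : ℝ)) ^ (1 : ℝ) * (1 + (n : ℝ)) ^ |s|) * (2 : ℝ) ^ ((ρ - ρ') * n)
        ≤ ((1 + (n : ℝ)) ^ C * (2 : ℝ) ^ ((ρ - ρ') * n))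
          * ((1 + (p : ℝ)) ^ s' * (1 + (q : ℝ)) ^ s') := by
      rw [key]
      have h1 : (1 + (n : ℝ)) ^ (-|s'|) * (1 + (n : ℝ)) ^ (-|s'|)
          ≤ (1 + (p : ℝ)) ^ s' * (1 + (q : ℝ)) ^ s' :=
        mul_le_mul hcp hcq (by positivity) (by positivity)
      calc (1 + (n : ℝ)) ^ C * ((1 + (n : ℝ)) ^ (-|s'|) * (1 + (n : ℝ)) ^ (-|s'|))
            * (2 : ℝ) ^ ((ρ - ρ') * n)
          ≤ (1 + (n : ℝ)) ^ C * ((1 + (p : ℝ)) ^ s' * (1 + (q : ℝ)) ^ s')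
            * (2 : ℝ) ^ ((ρ - ρ') * n) := by gcongr
        _ = ((1 + (n : ℝ)) ^ C * (2 : ℝ) ^ ((ρ - ρ') * n))
            * ((1 + (p : ℝ)) ^ s' * (1 + (q : ℝ)) ^ s') := by ring
    have step3 : ((1 + (n : ℝ)) ^ C * (2 : ℝ) ^ ((ρ - ρ') * n))
          * ((1 + (p : ℝ)) ^ s' * (1 + (q : ℝ)) ^ s')
        ≤ δ * ((1 + (p : ℝ)) ^ s' * (1 + (q : ℝ)) ^ s') := by
      have := hδ n
      rw [show -(ρ' - ρ) = ρ - ρ' by ring] at this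
      gcongr
    exact le_trans step1 (le_trans step2 step3)
  -- exponential split
  have hexp : (2 : ℝ) ^ (ρ * (n : ℝ))
      = (2 : ℝ) ^ ((ρ - ρ') * n) * ((2 : ℝ) ^ (ρ' * p) * (2 : ℝ) ^ (ρ' * q)) := by
    rw [← Real.rpow_add two_pos, ← Real.rpow_add two_pos]
    congr 1
    push_cast [hn]
    ring
  -- combine
  unfold wgt
  rw [hexp]
  calc ((p : ℝ) + q - 1) * ((n.factorial : ℝ) ^ σ
        * ((2 : ℝ) ^ ((ρ - ρ') * n) * ((2 : ℝ) ^ (ρ' * p) * (2 : ℝ) ^ (ρ' * q)))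
        * (1 + (n : ℝ)) ^ s)
      = (((p : ℝ) + q - 1) * (1 + (n : ℝ)) ^ s * (2 : ℝ) ^ ((ρ - ρ') * n))
        * ((n.factorial : ℝ) ^ σ * ((2 : ℝ) ^ (ρ' * p) * (2 : ℝ) ^ (ρ' * q))) := by ring
    _ ≤ (δ * ((1 + (p : ℝ)) ^ s' * (1 + (q : ℝ)) ^ s'))
        * (((p.factorial : ℝ)) ^ σ * ((q.factorial : ℝ)) ^ σ
          * ((2 : ℝ) ^ (ρ' * p) * (2 : ℝ) ^ (ρ' * q))) := by
        apply mul_le_mul hpoly _ (by positivity) (by positivity)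
        gcongr
    _ = δ * ((p.factorial : ℝ) ^ σ * (2 : ℝ) ^ (ρ' * p) * (1 + (p : ℝ)) ^ s')
        * ((q.factorial : ℝ) ^ σ * (2 : ℝ) ^ (ρ' * q) * (1 + (q : ℝ)) ^ s') := by ring
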